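/- If G₀⁺(t,s) = tanh t − tanh s + (t−s) tanh t tanh s and f: ℝ → ℝ is measurable with |f(t)| ≤ M e^{γ|t|} for some 0 < γ < 1, then the solution u(t) = ∫₀ᵗ G₀⁺(t,s)f(s) ds satisfies |u(t)| ≤ C M e^{γ|t|} for all t, where C depends only on γ. -/

import Mathlib

open Real MeasureTheory

lemma abs_tanh_le_one (x : ℝ) : |Real.tanh x| ≤ 1 := by
  rw [Real.tanh_eq_sinh_div_cosh, abs_div, abs_of_pos (Real.cosh_pos x),
    div_le_one (Real.cosh_pos x)]
  rw [abs_le]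
  constructor
  · rw [Real.sinh_eq, Real.cosh_eq]
    have := Real.exp_pos x
    have := Real.exp_pos (-x)
    nlinarith
  · rw [Real.sinh_eq, Real.cosh_eq]
    have := Real.exp_pos x
    have := Real.exp_pos (-x)
    nlinarith

lemma integral_exp_mul (c a b : ℝ) (hc : c ≠ 0) :
    ∫ s in a..b, Real.exp (c * s) = (Real.exp (c * b) - Real.exp (c * a)) / c := by
  have h := intervalIntegral.integral_comp_mul_left (a := a) (b := b) (fun x => Real.exp x) hc
  rw [integral_exp] at h
  rw [h, smul_eq_mul]
  field_simp

/-- The variation-of-parameters kernel `G₀⁺(t,s) = tanh t − tanh s + (t−s) tanh t tanh s`. -/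
noncomputable def greenG0 (t s : ℝ) : ℝ :=
  Real.tanh t - Real.tanh s + (t - s) * Real.tanh t * Real.tanh s


lemma greenG0_neg (t s : ℝ) : greenG0 (-t) (-s) = - greenG0 t s := by
  simp only [greenG0, Real.tanh_neg]; ring

lemma greenG0_aux (γ : ℝ) (hγ0 : 0 < γ) (M : ℝ) (f : ℝ → ℝ) (hf : Measurable f)
    (hb : ∀ t : ℝ, |f t| ≤ M * Real.exp (γ * |t|)) (t : ℝ) (ht : 0 ≤ t) :
    |∫ s in (0 : ℝ)..t, greenG0 t s * f s| ≤
      ((2 + 2/γ) * (2/γ)) * M * Real.exp (γ * t) := by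
  have hM : 0 ≤ M := by
    have := hb 0
    simp at this
    exact (abs_nonneg _).trans this
  set c := γ / 2 with hc
  have hc0 : 0 < c := by positivity
  set K := 2 + 2/γ with hK
  have hK0 : 0 < K := by positivity
  set A := M * K * Real.exp (γ * t - c * t) with hA
  have hA0 : 0 ≤ A := by positivity
  have hint : IntervalIntegrable (fun s => A * Real.exp (c * s)) volume 0 t :=
    (Continuous.intervalIntegrable (by continuity) 0 t)
  have hpt : ∀ᵐ s ∂(volume.restrict (Set.uIoc 0 t)),
      ‖greenG0 t s * f s‖ ≤ A * Real.exp (c * s) := by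
    rw [Set.uIoc_of_le ht]
    refine (ae_restrict_iff' measurableSet_Ioc).2 (Filter.Eventually.of_forall fun s hs => ?_)
    have hs0 : 0 < s := hs.1
    have hst : s ≤ t := hs.2
    have h1 : |greenG0 t s| ≤ 2 + (t - s) := by
      have e1 := abs_tanh_le_one t
      have e2 := abs_tanh_le_one s
      have : |greenG0 t s| ≤ |Real.tanh t - Real.tanh s| + |(t - s) * Real.tanh t * Real.tanh s| :=
        abs_add_le _ _
      have h3 : |Real.tanh t - Real.tanh s| ≤ 2 := by
        calc |Real.tanh t - Real.tanh s| ≤ |Real.tanh t| + |Real.tanh s| := abs_sub _ _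
        _ ≤ 2 := by linarith
      have h4 : |(t - s) * Real.tanh t * Real.tanh s| ≤ t - s := by
        rw [abs_mul, abs_mul, abs_of_nonneg (by linarith : (0:ℝ) ≤ t - s)]
        have hp : |Real.tanh t| * |Real.tanh s| ≤ 1 := mul_le_one₀ e1 (abs_nonneg _) e2
        calc (t - s) * |Real.tanh t| * |Real.tanh s| = (t - s) * (|Real.tanh t| * |Real.tanh s|) := by ring
        _ ≤ (t - s) * 1 := mul_le_mul_of_nonneg_left hp (by linarith)
        _ = t - s := mul_one _
      linarith
    have h2 : |f s| ≤ M * Real.exp (γ * s) := by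
      have := hb s
      rwa [abs_of_pos hs0] at this
    have hexp : Real.exp (c * (t - s)) * Real.exp (γ * s) = Real.exp (γ * t - c * t) * Real.exp (c * s) := by
      rw [← Real.exp_add, ← Real.exp_add]
      congr 1
      rw [hc]; ring
    have h5 : 2 + (t - s) ≤ K * Real.exp (c * (t - s)) := by
      have := Real.add_one_le_exp (c * (t - s))
      have hx : 0 ≤ t - s := by linarith
      rw [hK]
      have h6 : (1:ℝ) ≤ Real.exp (c * (t - s)) := by
        rw [← Real.exp_zero]
        exact Real.exp_le_exp.2 (by positivity)
      have h7 : 2 / γ = 1 / c := by rw [hc]; field_simp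
      rw [h7]
      have h8 : (1/c) * (c * (t - s)) = t - s := by field_simp
      nlinarith [mul_le_mul_of_nonneg_left this (show (0:ℝ) ≤ 2 + 1/c by positivity),
        mul_nonneg hc0.le hx, one_div_pos.mpr hc0, h8]
    rw [Real.norm_eq_abs, abs_mul, hA]
    calc |greenG0 t s| * |f s| ≤ (2 + (t - s)) * (M * Real.exp (γ * s)) := by
          apply mul_le_mul h1 h2 (abs_nonneg _) (by linarith)
    _ ≤ (K * Real.exp (c * (t - s))) * (M * Real.exp (γ * s)) := by
          apply mul_le_mul_of_nonneg_right h5 (by positivity)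
    _ = M * K * (Real.exp (c * (t - s)) * Real.exp (γ * s)) := by ring
    _ = M * K * Real.exp (γ * t - c * t) * Real.exp (c * s) := by rw [hexp]; ring
  have hmain := intervalIntegral.norm_integral_le_of_norm_le ht
    (by rw [Set.uIoc_of_le ht] at hpt; exact (ae_restrict_iff' measurableSet_Ioc).1 hpt) hint
  rw [Real.norm_eq_abs] at hmain
  refine hmain.trans ?_
  have hcne : c ≠ 0 := ne_of_gt hc0
  rw [intervalIntegral.integral_const_mul, integral_exp_mul c 0 t hcne]
  have hval : A * ((Real.exp (c * t) - Real.exp (c * 0)) / c) ≤ ((2 + 2/γ) * (2/γ)) * M * Real.exp (γ * t) := by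
    have h6 : Real.exp (c * 0) = 1 := by simp
    rw [h6]
    have h7 : A * Real.exp (c * t) = M * K * Real.exp (γ * t) := by
      rw [hA, mul_assoc, ← Real.exp_add]
      ring_nf
    calc A * ((Real.exp (c * t) - 1) / c) ≤ A * (Real.exp (c * t) / c) := by
          refine mul_le_mul_of_nonneg_left ((div_le_div_iff_of_pos_right hc0).2 (by linarith)) hA0
    _ = M * K * Real.exp (γ * t) / c := by rw [← mul_div_assoc, h7]
    _ = ((2 + 2/γ) * (2/γ)) * M * Real.exp (γ * t) := by
          rw [hK, hc]; field_simp
  exact hval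


/-- Weighted decay estimate: if `|f(t)| ≤ M e^{γ|t|}` with `0 < γ < 1`, then the
solution `u(t) = ∫₀ᵗ G₀⁺(t,s) f(s) ds` satisfies `|u(t)| ≤ C M e^{γ|t|}`,
where `C` depends only on `γ`. -/
theorem greenG0_weighted_bound (γ : ℝ) (hγ0 : 0 < γ) (hγ1 : γ < 1) :
    ∃ C : ℝ, 0 < C ∧ ∀ (M : ℝ) (f : ℝ → ℝ), Measurable f →
      (∀ t : ℝ, |f t| ≤ M * Real.exp (γ * |t|)) →
      ∀ t : ℝ, |∫ s in (0 : ℝ)..t, greenG0 t s * f s| ≤ C * M * Real.exp (γ * |t|) := by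
  refine ⟨(2 + 2/γ) * (2/γ), by positivity, fun M f hf hb t => ?_⟩
  rcases le_or_gt 0 t with ht | ht
  · rw [abs_of_nonneg ht]
    exact greenG0_aux γ hγ0 M f hf hb t ht
  · have ht' : (0:ℝ) ≤ -t := by linarith
    have hodd : ∀ s, greenG0 (-t) s = -(greenG0 t (-s)) := fun s => by
      rw [← greenG0_neg t (-s), neg_neg]
    have key : (∫ s in (0:ℝ)..(-t), greenG0 (-t) s * f (-s)) =
        ∫ s in (0:ℝ)..t, greenG0 t s * f s := by
      have h1 : ∀ s, greenG0 (-t) s * f (-s) = -((fun x => greenG0 t x * f x) (-s)) := by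
        intro s; simp only [hodd s]; ring
      simp_rw [h1]
      have h2 : (∫ x in (0:ℝ)..(-t), greenG0 t (-x) * f (-x)) =
          ∫ x in (-(-t))..(-(0:ℝ)), greenG0 t x * f x :=
        intervalIntegral.integral_comp_neg (fun x => greenG0 t x * f x)
      rw [intervalIntegral.integral_neg, h2, neg_zero, neg_neg,
        intervalIntegral.integral_symm, neg_neg]
    rw [← key, abs_of_neg ht]
    exact greenG0_aux γ hγ0 M (fun s => f (-s)) (hf.comp measurable_neg)
      (fun s => by simpa using hb (-s)) (-t) ht'
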